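/- arXiv:1808.03901 — 2 statements merged into one kernel-verified Lean document; each statement's English description precedes it below -/
import Mathlib

section
/- For every admissible multi-index k = (k₁,…,k_d) and every q ∈ (0,1), ζ[k : q] ≤ ζ[2 : q]; that is, ζ[2:q] is the maximum element of the set of multiple q-zeta values under the pointwise order. -/
open Finset Filter

/-- The q-integer [m:q] = (1-q^m)/(1-q). -/
noncomputable def qint (q : ℝ) (m : ℕ) : ℝ := (1 - q ^ m) / (1 - q)

/-- Tail of the multiple q-zeta value: sum over m₁ > ⋯ > m_d > n. -/
noncomputable def qZeta {d : ℕ} (q : ℝ) (k : Fin d → ℕ) (n : ℕ) : ℝ :=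
  ∑' m : {m : Fin d → ℕ // StrictAnti m ∧ ∀ i, n < m i},
    ∏ i, q ^ (m.1 i * (k i - 1)) / (qint q (m.1 i)) ^ (k i)

/-- The modified multiple q-zeta value ζ[k₁,…,k_d; r : q). -/
noncomputable def qZetaR {d : ℕ} (q : ℝ) (k : Fin d → ℕ) (r : ℕ) : ℝ :=
  ∑' m : {m : Fin (d + 1) → ℕ // StrictAnti m ∧ ∀ i, 0 < m i},
    (∏ i : Fin d, q ^ (m.1 i.castSucc * (k i - 1)) / (qint q (m.1 i.castSucc)) ^ (k i))
      / (m.1 (Fin.last d) : ℝ) ^ r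

/-- Multiple zeta value. -/
noncomputable def mzv {d : ℕ} (k : Fin d → ℕ) : ℝ :=
  ∑' m : {m : Fin d → ℕ // StrictAnti m ∧ ∀ i, 0 < m i},
    ∏ i, (1 : ℝ) / (m.1 i : ℝ) ^ (k i)

/-- Akhilesh's double tail of a multiple zeta value. -/
noncomputable def dtail {d : ℕ} (hd : 0 < d) (k : Fin d → ℕ) (p n : ℕ) : ℝ :=
  ∑' m : {m : Fin d → ℕ // StrictAnti m ∧ ∀ i, n < m i},
    ((Nat.choose (m.1 ⟨0, hd⟩ + p) p : ℝ))⁻¹ * ∏ i, (1 : ℝ) / (m.1 i : ℝ) ^ (k i)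

/-! ### Auxiliary machinery -/

open scoped ENNReal

section lems
variable {q : ℝ} (hq0 : 0 < q) (hq1 : q < 1)
include hq0 hq1

lemma qint_one_le {m : ℕ} (hm : 1 ≤ m) : 1 ≤ qint q m := by
  rw [qint, le_div_iff₀ (by linarith)]
  have h := pow_le_pow_of_le_one hq0.le hq1.le hm
  simp only [pow_one] at h
  linarith

lemma qint_pos {m : ℕ} (hm : 1 ≤ m) : 0 < qint q m :=
  lt_of_lt_of_le one_pos (qint_one_le hq0 hq1 hm)

lemma qpow_le_qint {m : ℕ} (hm : 1 ≤ m) : q ^ m ≤ qint q m :=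
  le_trans (pow_le_one₀ hq0.le hq1.le) (qint_one_le hq0 hq1 hm)

lemma qint_nonneg (m : ℕ) : 0 ≤ qint q m :=
  div_nonneg (by have := pow_le_one₀ hq0.le hq1.le (n := m); linarith)
    (by linarith)

lemma term_nonneg (k m : ℕ) : 0 ≤ q ^ (m * (k - 1)) / qint q m ^ k :=
  div_nonneg (pow_nonneg hq0.le _) (pow_nonneg (qint_nonneg hq0 hq1 m) _)

/-- For `k ≥ 1`, the term is at most `1/[m]`. -/
lemma term_le_one_div {k m : ℕ} (hk : 1 ≤ k) (hm : 1 ≤ m) :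
    q ^ (m * (k - 1)) / qint q m ^ k ≤ 1 / qint q m := by
  obtain ⟨c, rfl⟩ : ∃ c, k = c + 1 := ⟨k - 1, by omega⟩
  have hQ1 : 1 ≤ qint q m := qint_one_le hq0 hq1 hm
  have hQ : 0 < qint q m := qint_pos hq0 hq1 hm
  have hx : q ^ m ≤ qint q m := qpow_le_qint hq0 hq1 hm
  have h1 : q ^ (m * (c + 1 - 1)) / qint q m ^ (c + 1)
      = (q ^ m / qint q m) ^ c * (1 / qint q m) := by
    simp only [Nat.add_sub_cancel, pow_mul, div_pow, pow_succ]
    field_simp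
  rw [h1]
  have h2 : (q ^ m / qint q m) ^ c ≤ 1 :=
    pow_le_one₀ (div_nonneg (pow_nonneg hq0.le _) hQ.le) ((div_le_one hQ).2 hx)
  have h3 : (0:ℝ) ≤ 1 / qint q m := by positivity
  nlinarith

/-- For `k ≥ 2`, the term is at most `q^m/[m]^2`. -/
lemma term_le_two {k m : ℕ} (hk : 2 ≤ k) (hm : 1 ≤ m) :
    q ^ (m * (k - 1)) / qint q m ^ k ≤ q ^ m / qint q m ^ 2 := by
  obtain ⟨c, rfl⟩ : ∃ c, k = c + 2 := ⟨k - 2, by omega⟩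
  have hQ : 0 < qint q m := qint_pos hq0 hq1 hm
  have hx : q ^ m ≤ qint q m := qpow_le_qint hq0 hq1 hm
  have h1 : q ^ (m * (c + 2 - 1)) / qint q m ^ (c + 2)
      = (q ^ m / qint q m) ^ c * (q ^ m / qint q m ^ 2) := by
    rw [show c + 2 - 1 = c + 1 by omega]
    simp only [Nat.add_sub_cancel, pow_mul, div_pow, pow_succ]
    field_simp
  rw [h1]
  have h2 : (q ^ m / qint q m) ^ c ≤ 1 :=
    pow_le_one₀ (div_nonneg (pow_nonneg hq0.le _) hQ.le) ((div_le_one hQ).2 hx)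
  have h3 : (0:ℝ) ≤ q ^ m / qint q m ^ 2 := by positivity
  nlinarith

omit hq0 in
lemma qint_succ (m : ℕ) : qint q (m + 1) = 1 + q * qint q m := by
  have h : (1:ℝ) - q ≠ 0 := by linarith
  rw [qint, qint]
  field_simp
  ring

/-- telescoping identity -/
lemma qa_telescope {m : ℕ} (hm : 1 ≤ m) :
    q ^ m / qint q m - q ^ (m + 1) / qint q (m + 1)
      = q ^ m / (qint q m * qint q (m + 1)) := by
  have h1 : 0 < qint q m := qint_pos hq0 hq1 hm
  have h2 : 0 < qint q (m + 1) := qint_pos hq0 hq1 (by omega)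
  have h : (1:ℝ) - q ≠ 0 := by linarith
  rw [qint_succ hq1, pow_succ]
  field_simp
  ring

lemma term_two_le_telescope {m : ℕ} (hm : 1 ≤ m) :
    q ^ (m + 1) / qint q (m + 1) ^ 2
      ≤ q ^ m / qint q m - q ^ (m + 1) / qint q (m + 1) := by
  rw [qa_telescope hq0 hq1 hm]
  have h1 : 0 < qint q m := qint_pos hq0 hq1 hm
  have h2 : 0 < qint q (m + 1) := qint_pos hq0 hq1 (by omega)
  rw [pow_succ, sq, div_le_div_iff₀ (by positivity) (by positivity)]
  have key : q * qint q m ≤ qint q (m + 1) := by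
    rw [qint_succ hq1]; nlinarith
  nlinarith [mul_le_mul_of_nonneg_left key
    (by positivity : (0:ℝ) ≤ q ^ m * qint q (m + 1))]

end lems

/-- equiv enumerating `{x // n < x}` -/
def tailEquiv (n : ℕ) : ℕ ≃ {x : ℕ // n < x} where
  toFun i := ⟨n + 1 + i, by omega⟩
  invFun x := x.1 - (n + 1)
  left_inv i := by show n + 1 + i - (n + 1) = i; omega
  right_inv x := by ext; show n + 1 + (x.1 - (n + 1)) = x.1; omega

/-- `ℝ≥0∞`-valued multiple q-zeta tail. -/
noncomputable def EZ (q : ℝ) {d : ℕ} (k : Fin d → ℕ) (n : ℕ) : ℝ≥0∞ :=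
  ∑' m : {m : Fin d → ℕ // StrictAnti m ∧ ∀ i, n < m i},
    ENNReal.ofReal (∏ i, q ^ (m.1 i * (k i - 1)) / (qint q (m.1 i)) ^ (k i))

/-- `ℝ≥0∞`-valued tail of `ζ[2:q]`. -/
noncomputable def EZ2 (q : ℝ) (n : ℕ) : ℝ≥0∞ :=
  ∑' x : {x : ℕ // n < x}, ENNReal.ofReal (q ^ x.1 / qint q x.1 ^ 2)

section tail
variable {q : ℝ} (hq0 : 0 < q) (hq1 : q < 1)
include hq0 hq1

lemma EZ2_le_tail {j : ℕ} (hj : 1 ≤ j) :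
    EZ2 q j ≤ ENNReal.ofReal (q ^ j / qint q j) := by
  set b : ℕ → ℝ := fun i => q ^ (j + i) / qint q (j + i) with hb
  have hbanti : ∀ i, 0 ≤ b i - b (i + 1) := by
    intro i
    have h := term_two_le_telescope hq0 hq1 (m := j + i) (by omega)
    have h2 : 0 ≤ q ^ (j + i + 1) / qint q (j + i + 1) ^ 2 := by
      have := qint_nonneg hq0 hq1 (j + i + 1); positivity
    simp only [hb]
    have e : j + (i + 1) = j + i + 1 := by omega
    rw [e]; linarith
  have hb0 : ∀ i, 0 ≤ b i := by
    intro i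
    have := qint_nonneg hq0 hq1 (j + i)
    simp only [hb]; positivity
  have hbtend : Tendsto b atTop (nhds 0) := by
    apply squeeze_zero hb0 (g := fun i => q ^ j * q ^ i)
    · intro i
      simp only [hb, pow_add]
      exact div_le_self (by positivity) (qint_one_le hq0 hq1 (by omega))
    · have := tendsto_pow_atTop_nhds_zero_of_lt_one hq0.le hq1
      simpa using this.const_mul (q ^ j)
  have hsum : HasSum (fun i => b i - b (i + 1)) (b 0) := by
    rw [hasSum_iff_tendsto_nat_of_nonneg hbanti]
    have : ∀ N, ∑ i ∈ Finset.range N, (b i - b (i + 1)) = b 0 - b N :=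
      fun N => Finset.sum_range_sub' b N
    simp only [this]
    simpa using tendsto_const_nhds.sub hbtend
  have key : EZ2 q j ≤ ∑' i : ℕ, ENNReal.ofReal (b i - b (i + 1)) := by
    rw [EZ2, ← (tailEquiv j).tsum_eq]
    apply ENNReal.tsum_le_tsum
    intro i
    apply ENNReal.ofReal_le_ofReal
    have e : (tailEquiv j i).1 = j + i + 1 := by simp [tailEquiv]; omega
    rw [e]
    have h := term_two_le_telescope hq0 hq1 (m := j + i) (by omega)
    have e2 : j + (i + 1) = j + i + 1 := by omega
    simp only [hb, e2]
    linarith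
  calc EZ2 q j ≤ ∑' i : ℕ, ENNReal.ofReal (b i - b (i + 1)) := key
    _ = ENNReal.ofReal (∑' i : ℕ, (b i - b (i + 1))) :=
        (ENNReal.ofReal_tsum_of_nonneg hbanti hsum.summable).symm
    _ = ENNReal.ofReal (b 0) := by rw [hsum.tsum_eq]
    _ = ENNReal.ofReal (q ^ j / qint q j) := by simp [hb]

end tail

/-- The sigma-type map splitting off the last (smallest) index. -/
def snocFun {d n : ℕ}
    (p : Σ j : {x : ℕ // n < x}, {s : Fin (d + 1) → ℕ // StrictAnti s ∧ ∀ i, j.1 < s i}) :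
    {m : Fin (d + 2) → ℕ // StrictAnti m ∧ ∀ i, n < m i} :=
  ⟨Fin.snoc p.2.1 p.1.1, by
    obtain ⟨⟨j, hj⟩, ⟨s, hs1, hs2⟩⟩ := p
    constructor
    · rw [Fin.strictAnti_iff_succ_lt]
      intro i
      induction i using Fin.lastCases with
      | last =>
        rw [Fin.succ_last, Fin.snoc_last, Fin.snoc_castSucc]
        exact hs2 _
      | cast i =>
        rw [Fin.succ_castSucc, Fin.snoc_castSucc, Fin.snoc_castSucc]
        exact hs1 Fin.castSucc_lt_succ
    · intro i
      induction i using Fin.lastCases with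
      | last => rw [Fin.snoc_last]; exact hj
      | cast i => rw [Fin.snoc_castSucc]; exact lt_trans hj (hs2 i)⟩

lemma snocFun_bij {d n : ℕ} : Function.Bijective (snocFun (d := d) (n := n)) := by
  constructor
  · rintro ⟨⟨j, hj⟩, ⟨s, hs1, hs2⟩⟩ ⟨⟨j', hj'⟩, ⟨s', hs1', hs2'⟩⟩ h
    simp only [snocFun, Subtype.mk.injEq] at h
    have hjj : j = j' := by
      have := congrFun h (Fin.last (d + 1))
      simpa [Fin.snoc_last] using this
    have hss : s = s' := by
      funext i
      have := congrFun h i.castSucc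
      simpa [Fin.snoc_castSucc] using this
    subst hjj; subst hss; rfl
  · rintro ⟨m, hm1, hm2⟩
    refine ⟨⟨⟨m (Fin.last (d + 1)), hm2 _⟩, ⟨Fin.init m, ?_, ?_⟩⟩, ?_⟩
    · intro i i' h
      exact hm1 (by exact_mod_cast Fin.castSucc_lt_castSucc_iff.2 h)
    · intro i
      exact hm1 (Fin.castSucc_lt_last i)
    · simp only [snocFun, Subtype.mk.injEq]
      exact Fin.snoc_init_self m

noncomputable def snocEquiv (d n : ℕ) :
    (Σ j : {x : ℕ // n < x}, {s : Fin (d + 1) → ℕ // StrictAnti s ∧ ∀ i, j.1 < s i})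
      ≃ {m : Fin (d + 2) → ℕ // StrictAnti m ∧ ∀ i, n < m i} :=
  Equiv.ofBijective _ snocFun_bij

/-- Splitting off the smallest index from the sum. -/
lemma EZ_rec (q : ℝ) {d : ℕ} (k : Fin (d + 2) → ℕ) (n : ℕ) (hq0 : 0 < q) (hq1 : q < 1) :
    EZ q k n = ∑' j : {x : ℕ // n < x},
      EZ q (fun i : Fin (d + 1) => k i.castSucc) j.1
        * ENNReal.ofReal (q ^ (j.1 * (k (Fin.last (d + 1)) - 1))
            / qint q j.1 ^ (k (Fin.last (d + 1)))) := by
  rw [EZ, ← (snocEquiv d n).tsum_eq, ENNReal.tsum_sigma']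
  congr 1
  funext j
  have hval : ∀ s : {s : Fin (d + 1) → ℕ // StrictAnti s ∧ ∀ i, j.1 < s i},
      ENNReal.ofReal (∏ i : Fin (d + 2),
          q ^ ((((snocEquiv d n) ⟨j, s⟩).1 i) * (k i - 1))
            / qint q (((snocEquiv d n) ⟨j, s⟩).1 i) ^ (k i))
        = ENNReal.ofReal
            (∏ i : Fin (d + 1), q ^ (s.1 i * (k i.castSucc - 1)) / qint q (s.1 i) ^ (k i.castSucc))
          * ENNReal.ofReal (q ^ (j.1 * (k (Fin.last (d + 1)) - 1))
              / qint q j.1 ^ (k (Fin.last (d + 1)))) := by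
    intro s
    have h1 : (((snocEquiv d n) ⟨j, s⟩).1 : Fin (d + 2) → ℕ) = Fin.snoc s.1 j.1 := rfl
    rw [h1, Fin.prod_univ_castSucc]
    simp only [Fin.snoc_castSucc, Fin.snoc_last]
    rw [ENNReal.ofReal_mul]
    exact Finset.prod_nonneg fun i _ => div_nonneg (pow_nonneg hq0.le _)
      (pow_nonneg (div_nonneg (by nlinarith [pow_le_one₀ hq0.le hq1.le (n := s.1 i)]) (by linarith)) _)
  rw [tsum_congr hval, ENNReal.tsum_mul_right, EZ]

/-- one-variable case as a sum over `{x // n < x}` -/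
def oneEquiv (n : ℕ) : {x : ℕ // n < x} ≃ {m : Fin 1 → ℕ // StrictAnti m ∧ ∀ i, n < m i} where
  toFun x := ⟨fun _ => x.1, ⟨fun i j h => absurd (Subsingleton.elim i j ▸ h) (lt_irrefl _),
    fun _ => x.2⟩⟩
  invFun m := ⟨m.1 0, m.2.2 0⟩
  left_inv x := rfl
  right_inv m := by ext i; exact congrArg m.1 (Subsingleton.elim 0 i)

lemma EZ_one (q : ℝ) (k : Fin 1 → ℕ) (n : ℕ) :
    EZ q k n = ∑' x : {x : ℕ // n < x},
      ENNReal.ofReal (q ^ (x.1 * (k 0 - 1)) / qint q x.1 ^ (k 0)) := by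
  rw [EZ, ← (oneEquiv n).tsum_eq]
  exact tsum_congr fun x => by simp [oneEquiv]

section main
variable {q : ℝ} (hq0 : 0 < q) (hq1 : q < 1)
include hq0 hq1

lemma main_ineq : ∀ (d : ℕ) (k : Fin (d + 1) → ℕ), 2 ≤ k 0 → (∀ i, 1 ≤ k i) →
    ∀ n, EZ q k n ≤ EZ2 q n := by
  intro d
  induction d with
  | zero =>
    intro k hk1 hk n
    rw [EZ_one, EZ2]
    refine ENNReal.tsum_le_tsum fun x => ENNReal.ofReal_le_ofReal ?_
    exact term_le_two hq0 hq1 hk1 (by omega)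
  | succ d ih =>
    intro k hk1 hk n
    rw [EZ_rec q k n hq0 hq1, EZ2]
    refine ENNReal.tsum_le_tsum fun j => ?_
    have hj1 : 1 ≤ j.1 := by have := j.2; omega
    have step1 : EZ q (fun i : Fin (d + 1) => k i.castSucc) j.1 ≤
        ENNReal.ofReal (q ^ j.1 / qint q j.1) := by
      refine le_trans (ih (fun i => k i.castSucc) ?_ (fun i => hk _) j.1)
        (EZ2_le_tail hq0 hq1 hj1)
      simpa using hk1
    calc EZ q (fun i : Fin (d + 1) => k i.castSucc) j.1
          * ENNReal.ofReal (q ^ (j.1 * (k (Fin.last (d + 1)) - 1))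
              / qint q j.1 ^ (k (Fin.last (d + 1))))
        ≤ ENNReal.ofReal (q ^ j.1 / qint q j.1) * ENNReal.ofReal (1 / qint q j.1) :=
          mul_le_mul' step1 (ENNReal.ofReal_le_ofReal
            (term_le_one_div hq0 hq1 (hk _) hj1))
      _ = ENNReal.ofReal (q ^ j.1 / qint q j.1 * (1 / qint q j.1)) := by
          rw [← ENNReal.ofReal_mul]
          exact div_nonneg (pow_nonneg hq0.le _) (qint_nonneg hq0 hq1 j.1)
      _ = ENNReal.ofReal (q ^ j.1 / qint q j.1 ^ 2) := by
          rw [sq, div_mul_div_comm, mul_one]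

lemma EZ2_ne_top : EZ2 q 0 ≠ ⊤ := by
  have h1 : EZ2 q 0 ≤ ∑' x : {x : ℕ // 0 < x}, ENNReal.ofReal (q ^ x.1) := by
    refine ENNReal.tsum_le_tsum fun x => ENNReal.ofReal_le_ofReal ?_
    have hx : 1 ≤ x.1 := x.2
    have h2 : 1 ≤ qint q x.1 ^ 2 := one_le_pow₀ (qint_one_le hq0 hq1 hx)
    calc q ^ x.1 / qint q x.1 ^ 2 ≤ q ^ x.1 / 1 :=
          div_le_div_of_nonneg_left (pow_nonneg hq0.le _) one_pos h2
      _ = q ^ x.1 := div_one _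
  have h2 : (∑' x : {x : ℕ // 0 < x}, ENNReal.ofReal (q ^ x.1))
      ≤ ∑' x : ℕ, ENNReal.ofReal (q ^ x) :=
    Summable.tsum_le_tsum_of_inj (Subtype.val) Subtype.val_injective
      (fun _ _ => zero_le) (fun _ => le_rfl) ENNReal.summable ENNReal.summable
  have h3 : (∑' x : ℕ, ENNReal.ofReal (q ^ x)) = (1 - ENNReal.ofReal q)⁻¹ := by
    have : ∀ x : ℕ, ENNReal.ofReal (q ^ x) = (ENNReal.ofReal q) ^ x :=
      fun x => ENNReal.ofReal_pow hq0.le x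
    simp only [this]
    exact ENNReal.tsum_geometric _
  have h4 : (1 - ENNReal.ofReal q)⁻¹ ≠ ⊤ := by
    rw [ENNReal.inv_ne_top]
    have : ENNReal.ofReal q < 1 := ENNReal.ofReal_lt_one.2 hq1
    exact ne_of_gt (tsub_pos_iff_lt.2 this)
  exact ne_top_of_le_ne_top (h3 ▸ h4) (le_trans h1 h2)

end main

lemma tsum_eq_toReal {ι : Type*} (f : ι → ℝ) (hf : ∀ i, 0 ≤ f i)
    (h : ∑' i, ENNReal.ofReal (f i) ≠ ⊤) :
    ∑' i, f i = (∑' i, ENNReal.ofReal (f i)).toReal := by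
  have hs : Summable f := by
    have h2 := ENNReal.summable_toReal h
    exact h2.congr fun i => ENNReal.toReal_ofReal (hf i)
  rw [← ENNReal.ofReal_tsum_of_nonneg hf hs, ENNReal.toReal_ofReal (tsum_nonneg hf)]


theorem stmt9 (d : ℕ) (hd : 0 < d) (k : Fin d → ℕ) (hk1 : 2 ≤ k ⟨0, hd⟩)
    (hk : ∀ i, 1 ≤ k i) (q : ℝ) (hq : q ∈ Set.Ioo (0:ℝ) 1) :
    qZeta q k 0 ≤ qZeta q (fun _ : Fin 1 => 2) 0 := by
  obtain ⟨hq0, hq1⟩ := hq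
  cases d with
  | zero => omega
  | succ d =>
    have hk0 : 2 ≤ k 0 := by simpa using hk1
    have hmain : EZ q k 0 ≤ EZ2 q 0 := main_ineq hq0 hq1 d k hk0 hk 0
    have h2eq : EZ q (fun _ : Fin 1 => 2) 0 = EZ2 q 0 := by
      rw [EZ_one, EZ2]
      exact tsum_congr fun x => by norm_num
    have hne : EZ2 q 0 ≠ ⊤ := EZ2_ne_top hq0 hq1
    have hneL : EZ q k 0 ≠ ⊤ := ne_top_of_le_ne_top hne hmain
    have hne2 : EZ q (fun _ : Fin 1 => 2) 0 ≠ ⊤ := by rw [h2eq]; exact hne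
    have e1 : qZeta q k 0 = (EZ q k 0).toReal := by
      rw [qZeta]
      exact tsum_eq_toReal _
        (fun m => Finset.prod_nonneg fun i _ => term_nonneg hq0 hq1 _ _) hneL
    have e2 : qZeta q (fun _ : Fin 1 => 2) 0 = (EZ q (fun _ : Fin 1 => 2) 0).toReal := by
      rw [qZeta]
      exact tsum_eq_toReal _
        (fun m => Finset.prod_nonneg fun i _ => term_nonneg hq0 hq1 _ _) hne2
    rw [e1, e2, h2eq]
    exact ENNReal.toReal_mono hne hmain
end

section
/- The function q ↦ ζ[2:q] = Σ_{m>0} q^m/[m:q]² on (0,1) satisfies lim_{q→0⁺} ζ[2:q] = 0 and lim_{q→1⁻} ζ[2:q] = ζ(2) = π²/6; in particular it is bounded on (0,1). -/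
open Finset Filter

noncomputable def qa11 (q : ℝ) (n : ℕ) : ℝ := q ^ (n+1) / (qint q (n+1)) ^ 2

def stmt11Equiv : ℕ ≃ {m : Fin 1 → ℕ // StrictAnti m ∧ ∀ i, 0 < m i} where
  toFun n := ⟨fun _ => n + 1, ⟨fun i j h => absurd (Subsingleton.elim i j) h.ne, fun _ => n.succ_pos⟩⟩
  invFun s := s.1 0 - 1
  left_inv n := by simp
  right_inv s := by
    ext i
    have : i = 0 := Subsingleton.elim i 0
    subst this
    simp [Nat.sub_add_cancel (s.2.2 0)]

lemma qZeta_eq (q : ℝ) : qZeta q (fun _ : Fin 1 => 2) 0 = ∑' n : ℕ, qa11 q n := by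
  rw [qZeta, ← stmt11Equiv.tsum_eq]
  congr 1
  ext n
  simp [stmt11Equiv, qa11, Fin.prod_univ_one]

lemma qint_eq_sum {q : ℝ} (hq : q ≠ 1) (m : ℕ) : qint q m = ∑ j ∈ Finset.range m, q ^ j := by
  rw [qint, geom_sum_eq hq]
  rw [div_eq_div_iff (by intro h; apply hq; linarith) (by intro h; apply hq; linarith)]
  ring

lemma qa_nonneg {q : ℝ} (hq : q ∈ Set.Ioo (0:ℝ) 1) (n : ℕ) : 0 ≤ qa11 q n := by
  have h1 : (0:ℝ) ≤ qint q (n+1) := by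
    rw [qint_eq_sum hq.2.ne (n+1)]
    exact Finset.sum_nonneg fun j _ => pow_nonneg hq.1.le j
  exact div_nonneg (pow_nonneg hq.1.le _) (pow_nonneg h1 2)

lemma qint_ge_one {q : ℝ} (hq : q ∈ Set.Ioo (0:ℝ) 1) (n : ℕ) : 1 ≤ qint q (n+1) := by
  rw [qint_eq_sum hq.2.ne (n+1)]
  calc (1:ℝ) = ∑ j ∈ Finset.range 1, q ^ j := by simp
    _ ≤ _ := Finset.sum_le_sum_of_subset_of_nonneg
        (Finset.range_subset_range.2 n.succ_pos) (fun j _ _ => pow_nonneg hq.1.le j)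

lemma qa_le_pow {q : ℝ} (hq : q ∈ Set.Ioo (0:ℝ) 1) (n : ℕ) : qa11 q n ≤ q ^ (n+1) := by
  rw [qa11]
  calc q ^ (n+1) / (qint q (n+1)) ^ 2 ≤ q ^ (n+1) / 1 ^ 2 := by
        apply div_le_div_of_nonneg_left (pow_nonneg hq.1.le _) (by norm_num)
          (by nlinarith [qint_ge_one hq n])
    _ = q ^ (n+1) := by ring

lemma qa_le_bound {q : ℝ} (hq : q ∈ Set.Ioo (0:ℝ) 1) (n : ℕ) : qa11 q n ≤ 4 / ((n:ℝ)+1) ^ 2 := by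
  obtain ⟨hq0, hq1⟩ := hq
  set ε : ℝ := -Real.log q with hε
  have hεpos : 0 < ε := by
    have := Real.log_neg hq0 hq1
    simp only [hε]; linarith
  have hqexp : q = Real.exp (-ε) := by
    rw [hε, neg_neg, Real.exp_log hq0]
  set m : ℕ := n + 1 with hm
  have hmpos : (0:ℝ) < m := by positivity
  have hqm : q ^ m = Real.exp (-(m * ε)) := by
    rw [hqexp, ← Real.exp_nat_mul]; ring_nf
  -- 1 - q ≤ ε
  have h1 : 1 - q ≤ ε := by
    have := Real.add_one_le_exp (-ε)
    rw [← hqexp] at this; linarith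
  have h1q : 0 < 1 - q := by linarith
  -- 1 - q^m ≥ mε/(1+mε)
  have h2 : (m * ε) / (1 + m * ε) ≤ 1 - q ^ m := by
    have hx : (0:ℝ) < 1 + m * ε := by positivity
    have := Real.add_one_le_exp (m * ε)
    have hqmle : q ^ m ≤ 1 / (1 + m * ε) := by
      rw [hqm, Real.exp_neg, inv_le_comm₀ (Real.exp_pos _) (by positivity), one_div, inv_inv]
      linarith
    have : q ^ m ≤ 1 - (m * ε) / (1 + m * ε) := by
      rw [one_sub_div hx.ne']
      calc q ^ m ≤ 1 / (1 + m * ε) := hqmle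
        _ = (1 + m * ε - m * ε) / (1 + m * ε) := by ring_nf
    linarith
  -- qint ≥ m/(1+mε)
  have hx : (0:ℝ) < 1 + m * ε := by positivity
  have h3 : (m:ℝ) / (1 + m * ε) ≤ qint q m := by
    rw [qint, div_le_div_iff₀ hx h1q]
    calc (m:ℝ) * (1 - q) ≤ m * ε := by nlinarith
      _ = (m * ε / (1 + m * ε)) * (1 + m * ε) := by field_simp
      _ ≤ (1 - q ^ m) * (1 + m * ε) := mul_le_mul_of_nonneg_right h2 hx.le
  -- (1+mε)^2 ≤ 4 exp(mε)
  have h4 : (1 + m * ε) ^ 2 ≤ 4 * Real.exp (m * ε) := by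
    have h5 := Real.add_one_le_exp (m * ε / 2)
    have h6 : 1 + m * ε ≤ 2 * Real.exp (m * ε / 2) := by nlinarith [Real.exp_pos (m * ε / 2), hεpos, hmpos]
    calc (1 + m * ε) ^ 2 ≤ (2 * Real.exp (m * ε / 2)) ^ 2 := by
          apply pow_le_pow_left₀ (by positivity) h6
      _ = 4 * Real.exp (m * ε) := by
          rw [mul_pow, sq (Real.exp (↑m * ε / 2)), ← Real.exp_add]
          norm_num
  -- conclude
  have hqintpos : 0 < qint q m := lt_of_lt_of_le (by positivity) h3
  have key : qa11 q n ≤ Real.exp (-(m * ε)) * (1 + m * ε) ^ 2 / (m:ℝ) ^ 2 := by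
    rw [qa11, ← hm]
    rw [div_le_div_iff₀ (by positivity) (by positivity)]
    have h7 : (m:ℝ) ^ 2 ≤ qint q m ^ 2 * (1 + m * ε) ^ 2 := by
      have := mul_le_mul_of_nonneg_right h3 hx.le
      rw [div_mul_cancel₀ _ hx.ne'] at this
      calc (m:ℝ) ^ 2 ≤ (qint q m * (1 + m * ε)) ^ 2 := by
            apply pow_le_pow_left₀ (by positivity) this
        _ = _ := by ring
    calc q ^ m * (m:ℝ)^2 ≤ q ^ m * (qint q m ^ 2 * (1 + m * ε) ^ 2) := by
          apply mul_le_mul_of_nonneg_left h7 (by positivity)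
      _ = Real.exp (-(m*ε)) * (1 + m * ε)^2 * qint q m ^ 2 := by rw [hqm]; ring
  calc qa11 q n ≤ Real.exp (-(m * ε)) * (1 + m * ε) ^ 2 / (m:ℝ) ^ 2 := key
    _ ≤ Real.exp (-(m * ε)) * (4 * Real.exp (m * ε)) / (m:ℝ) ^ 2 := by
        apply div_le_div_of_nonneg_right _ (by positivity)
        exact mul_le_mul_of_nonneg_left h4 (Real.exp_pos _).le
    _ = 4 / ((n:ℝ)+1) ^ 2 := by
        rw [Real.exp_neg]
        have h8 : (Real.exp (↑m * ε))⁻¹ * (4 * Real.exp (↑m * ε)) = 4 := by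
          field_simp
        rw [h8, hm]
        push_cast
        ring_nf

set_option maxHeartbeats 1000000 in
lemma bound_summable : Summable (fun n : ℕ => 4 / ((n:ℝ)+1) ^ 2) := by
  have h : Summable (fun n : ℕ => (1:ℝ) / (n:ℝ) ^ 2) :=
    Real.summable_one_div_nat_pow.2 one_lt_two
  have h2 : Summable (fun n : ℕ => (1:ℝ) / ((n+1:ℕ):ℝ) ^ 2) :=
    (summable_nat_add_iff 1).2 h
  have h3 : Summable (fun n : ℕ => (1:ℝ) / ((n:ℝ)+1) ^ 2) := by
    convert h2 using 2 with n
    push_cast; ring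
  have h4 := h3.mul_left 4
  simp only [mul_one_div] at h4
  exact h4

lemma qa_summable {q : ℝ} (hq : q ∈ Set.Ioo (0:ℝ) 1) : Summable (qa11 q) :=
  Summable.of_nonneg_of_le (qa_nonneg hq) (qa_le_bound hq) bound_summable

lemma g_hasSum : HasSum (fun n : ℕ => (1:ℝ) / ((n:ℝ)+1) ^ 2) (Real.pi ^ 2 / 6) := by
  have h0 : HasSum (fun n : ℕ => (1:ℝ) / (n:ℝ) ^ 2)
      (Real.pi ^ 2 / 6 + ∑ i ∈ Finset.range 1, (1:ℝ) / (i:ℝ) ^ 2) := by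
    simpa using hasSum_zeta_two
  have h := (hasSum_nat_add_iff (f := fun n : ℕ => (1:ℝ) / (n:ℝ) ^ 2) 1).2 h0
  convert h using 2 with n
  case e'_3 => rfl
  push_cast; ring

lemma qa_tendsto (n : ℕ) :
    Tendsto (fun q => qa11 q n) (nhdsWithin 1 (Set.Ioo (0:ℝ) 1))
      (nhds ((1:ℝ) / ((n:ℝ)+1) ^ 2)) := by
  have hcont : ContinuousAt (fun q : ℝ => q ^ (n+1) / (∑ j ∈ Finset.range (n+1), q ^ j) ^ 2) 1 := by
    apply ContinuousAt.div
    · exact (continuous_pow (n+1)).continuousAt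
    · exact ((continuous_finset_sum _ (fun j _ => continuous_pow j)).pow 2).continuousAt
    · simp
      positivity
  have hval : (fun q : ℝ => q ^ (n+1) / (∑ j ∈ Finset.range (n+1), q ^ j) ^ 2) 1
      = (1:ℝ) / ((n:ℝ)+1) ^ 2 := by
    simp
  have h1 : Tendsto (fun q : ℝ => q ^ (n+1) / (∑ j ∈ Finset.range (n+1), q ^ j) ^ 2)
      (nhdsWithin 1 (Set.Ioo (0:ℝ) 1)) (nhds ((1:ℝ) / ((n:ℝ)+1) ^ 2)) := by
    rw [← hval]
    exact hcont.continuousWithinAt.tendsto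
  apply h1.congr'
  filter_upwards [self_mem_nhdsWithin] with q hq
  rw [qa11, qint_eq_sum hq.2.ne]


theorem stmt11 :
    Tendsto (fun q : ℝ => qZeta q (fun _ : Fin 1 => 2) 0)
        (nhdsWithin 0 (Set.Ioo (0:ℝ) 1)) (nhds 0) ∧
    Tendsto (fun q : ℝ => qZeta q (fun _ : Fin 1 => 2) 0)
        (nhdsWithin 1 (Set.Ioo (0:ℝ) 1)) (nhds (Real.pi ^ 2 / 6)) ∧
    ∃ C : ℝ, ∀ q ∈ Set.Ioo (0:ℝ) 1, |qZeta q (fun _ : Fin 1 => 2) 0| ≤ C := by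
  refine ⟨?_, ?_, ?_⟩
  · -- q → 0
    have hle : ∀ q ∈ Set.Ioo (0:ℝ) 1, qZeta q (fun _ : Fin 1 => 2) 0 ≤ q / (1 - q) := by
      intro q hq
      rw [qZeta_eq]
      have hgeom0 : Summable (fun n : ℕ => q ^ n) :=
        summable_geometric_of_lt_one hq.1.le hq.2
      have hgeom : Summable (fun n : ℕ => q ^ (n+1)) := (summable_nat_add_iff 1).2 hgeom0
      have h1 := Summable.tsum_le_tsum (fun n => qa_le_pow hq n) (qa_summable hq) hgeom
      refine h1.trans ?_
      have h2 : ∑' n : ℕ, q ^ (n+1) = q / (1-q) := by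
        calc ∑' n : ℕ, q ^ (n+1) = ∑' n : ℕ, q * q ^ n := by
              exact tsum_congr fun n => by rw [pow_succ]; ring
          _ = q * ∑' n : ℕ, q ^ n := tsum_mul_left
          _ = q * (1-q)⁻¹ := by rw [tsum_geometric_of_lt_one hq.1.le hq.2]
          _ = q / (1-q) := by rw [div_eq_mul_inv]
      rw [h2]
    have h0 : Tendsto (fun q : ℝ => q / (1-q)) (nhdsWithin 0 (Set.Ioo (0:ℝ) 1)) (nhds 0) := by
      have hc : ContinuousAt (fun q : ℝ => q / (1-q)) 0 :=
        ContinuousAt.div continuousAt_id (continuousAt_const.sub continuousAt_id) (by norm_num)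
      simpa using hc.continuousWithinAt.tendsto
    apply tendsto_of_tendsto_of_tendsto_of_le_of_le' tendsto_const_nhds h0
    · filter_upwards [self_mem_nhdsWithin] with q hq
      rw [qZeta_eq]
      exact tsum_nonneg (qa_nonneg hq)
    · filter_upwards [self_mem_nhdsWithin] with q hq using hle q hq
  · -- q → 1
    have h := tendsto_tsum_of_dominated_convergence
      (f := fun (q : ℝ) (n : ℕ) => qa11 q n)
      (g := fun n : ℕ => (1:ℝ) / ((n:ℝ)+1) ^ 2)
      (𝓕 := nhdsWithin 1 (Set.Ioo (0:ℝ) 1))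
      bound_summable qa_tendsto ?_
    · convert h using 1
      · funext q; exact qZeta_eq q
      · rw [g_hasSum.tsum_eq]
    · filter_upwards [self_mem_nhdsWithin] with q hq
      intro n
      rw [Real.norm_eq_abs, abs_of_nonneg (qa_nonneg hq n)]
      exact qa_le_bound hq n
  · -- boundedness
    refine ⟨∑' n : ℕ, 4 / ((n:ℝ)+1) ^ 2, fun q hq => ?_⟩
    rw [qZeta_eq, abs_of_nonneg (tsum_nonneg (qa_nonneg hq))]
    exact Summable.tsum_le_tsum (qa_le_bound hq) (qa_summable hq) bound_summable
end
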